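/- Let R be a semisimple ring and e, e' ∈ R idempotents such that the left ideals Re and Re' are isomorphic as left R-modules and the left ideals R(1−e) and R(1−e') are isomorphic as left R-modules. Then there exists a unit u ∈ R^× with u e u⁻¹ = e'. -/

import Mathlib

private lemma aux_mul_self {R : Type*} [Ring R] {a x : R} (ha : a * a = a)
    (hx : x ∈ Submodule.span R {a}) : x * a = x := by
  obtain ⟨r, rfl⟩ := Submodule.mem_span_singleton.mp hx
  simp [smul_eq_mul, mul_assoc, ha]

/-- In a semisimple ring, two idempotents `e, e'` with `Re ≅ Re'` and
`R(1-e) ≅ R(1-e')` as left `R`-modules are conjugate by a unit. -/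
theorem stmt_8 {R : Type*} [Ring R] [IsSemisimpleRing R] (e e' : R)
    (he : e * e = e) (he' : e' * e' = e')
    (h1 : Nonempty ((Submodule.span R {e} : Submodule R R) ≃ₗ[R]
      (Submodule.span R {e'} : Submodule R R)))
    (h2 : Nonempty ((Submodule.span R {1 - e} : Submodule R R) ≃ₗ[R]
      (Submodule.span R {1 - e'} : Submodule R R))) :
    ∃ u : Rˣ, (u : R) * e * ↑u⁻¹ = e' := by
  obtain ⟨f⟩ := h1
  obtain ⟨g⟩ := h2
  have hce : (1 - e) * (1 - e) = 1 - e := by noncomm_ring [he]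
  have hce' : (1 - e') * (1 - e') = 1 - e' := by noncomm_ring [he']
  set xe : (Submodule.span R {e} : Submodule R R) := ⟨e, Submodule.mem_span_singleton_self e⟩
  set xe' : (Submodule.span R {e'} : Submodule R R) := ⟨e', Submodule.mem_span_singleton_self e'⟩
  set yc : (Submodule.span R {1-e} : Submodule R R) := ⟨1-e, Submodule.mem_span_singleton_self _⟩
  set yc' : (Submodule.span R {1-e'} : Submodule R R) := ⟨1-e', Submodule.mem_span_singleton_self _⟩
  set u : R := (f xe : R) + (g yc : R) with hu
  set v : R := (f.symm xe' : R) + (g.symm yc' : R) with hv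
  -- basic facts
  have hfe : ((f xe : R)) * e' = (f xe : R) := aux_mul_self he' (f xe).2
  have hgc : ((g yc : R)) * (1 - e') = (g yc : R) := aux_mul_self hce' (g yc).2
  have hfe' : ((f.symm xe' : R)) * e = (f.symm xe' : R) := aux_mul_self he (f.symm xe').2
  have hgc' : ((g.symm yc' : R)) * (1 - e) = (g.symm yc' : R) := aux_mul_self hce (g.symm yc').2
  -- e * u = f e, (1-e) * u = g (1-e)
  have heu : e * u = (f xe : R) := by
    have h1 : e • xe = xe := Subtype.ext (by simpa [smul_eq_mul] using he)
    have h2 : e • yc = 0 := Subtype.ext (by simp [smul_eq_mul, mul_sub, he, yc])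
    calc e * u = (e • f xe : R) + (e • g yc : R) := by rw [hu, mul_add]; rfl
    _ = ((f (e • xe) : R)) + ((g (e • yc) : R)) := by rw [map_smul, map_smul]; rfl
    _ = (f xe : R) := by rw [h1, h2, map_zero]; simp
  have hcu : (1 - e) * u = (g yc : R) := by
    have h1 : (1 - e) • yc = yc := Subtype.ext (by simp [smul_eq_mul, hce, yc])
    have h2 : (1 - e) • xe = 0 := Subtype.ext (by simp [smul_eq_mul, sub_mul, he, xe])
    calc (1 - e) * u = ((1-e) • f xe : R) + ((1-e) • g yc : R) := by rw [hu, mul_add]; rfl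
    _ = ((f ((1-e) • xe) : R)) + ((g ((1-e) • yc) : R)) := by rw [map_smul, map_smul]; rfl
    _ = (g yc : R) := by rw [h1, h2, map_zero]; simp
  have he'v : e' * v = (f.symm xe' : R) := by
    have h1 : e' • xe' = xe' := Subtype.ext (by simpa [smul_eq_mul] using he')
    have h2 : e' • yc' = 0 := Subtype.ext (by simp [smul_eq_mul, mul_sub, he', yc'])
    calc e' * v = (e' • f.symm xe' : R) + (e' • g.symm yc' : R) := by rw [hv, mul_add]; rfl
    _ = ((f.symm (e' • xe') : R)) + ((g.symm (e' • yc') : R)) := by rw [map_smul, map_smul]; rfl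
    _ = (f.symm xe' : R) := by rw [h1, h2, map_zero]; simp
  have hc'v : (1 - e') * v = (g.symm yc' : R) := by
    have h1 : (1 - e') • yc' = yc' := Subtype.ext (by simp [smul_eq_mul, hce', yc'])
    have h2 : (1 - e') • xe' = 0 := Subtype.ext (by simp [smul_eq_mul, sub_mul, he', xe'])
    calc (1 - e') * v = ((1-e') • f.symm xe' : R) + ((1-e') • g.symm yc' : R) := by rw [hv, mul_add]; rfl
    _ = ((f.symm ((1-e') • xe') : R)) + ((g.symm ((1-e') • yc') : R)) := by
          rw [map_smul, map_smul]; rfl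
    _ = (g.symm yc' : R) := by rw [h1, h2, map_zero]; simp
  -- u * v = 1
  have huv : u * v = 1 := by
    have t1 : (f xe : R) * v = e := by
      calc (f xe : R) * v = ((f xe : R) * e') * v := by rw [hfe]
      _ = (f xe : R) * (e' * v) := by rw [mul_assoc]
      _ = (f xe : R) • (f.symm xe' : R) := by rw [he'v]; rfl
      _ = ((f.symm ((f xe : R) • xe') : R)) := by rw [map_smul]; rfl
      _ = e := by
            have : (f xe : R) • xe' = f xe := Subtype.ext (by simpa [smul_eq_mul] using hfe)
            rw [this, LinearEquiv.symm_apply_apply]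
    have t2 : (g yc : R) * v = 1 - e := by
      calc (g yc : R) * v = ((g yc : R) * (1 - e')) * v := by rw [hgc]
      _ = (g yc : R) * ((1 - e') * v) := by rw [mul_assoc]
      _ = (g yc : R) • (g.symm yc' : R) := by rw [hc'v]; rfl
      _ = ((g.symm ((g yc : R) • yc') : R)) := by rw [map_smul]; rfl
      _ = 1 - e := by
            have : (g yc : R) • yc' = g yc := Subtype.ext (by simpa [smul_eq_mul] using hgc)
            rw [this, LinearEquiv.symm_apply_apply]
    calc u * v = (f xe : R) * v + (g yc : R) * v := by rw [hu, add_mul]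
    _ = 1 := by rw [t1, t2]; noncomm_ring
  -- v * u = 1
  have hvu : v * u = 1 := by
    have t1 : (f.symm xe' : R) * u = e' := by
      calc (f.symm xe' : R) * u = ((f.symm xe' : R) * e) * u := by rw [hfe']
      _ = (f.symm xe' : R) * (e * u) := by rw [mul_assoc]
      _ = (f.symm xe' : R) • (f xe : R) := by rw [heu]; rfl
      _ = ((f ((f.symm xe' : R) • xe) : R)) := by rw [map_smul]; rfl
      _ = e' := by
            have : (f.symm xe' : R) • xe = f.symm xe' :=
              Subtype.ext (by simpa [smul_eq_mul] using hfe')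
            rw [this, LinearEquiv.apply_symm_apply]
    have t2 : (g.symm yc' : R) * u = 1 - e' := by
      calc (g.symm yc' : R) * u = ((g.symm yc' : R) * (1 - e)) * u := by rw [hgc']
      _ = (g.symm yc' : R) * ((1 - e) * u) := by rw [mul_assoc]
      _ = (g.symm yc' : R) • (g yc : R) := by rw [hcu]; rfl
      _ = ((g ((g.symm yc' : R) • yc) : R)) := by rw [map_smul]; rfl
      _ = 1 - e' := by
            have : (g.symm yc' : R) • yc = g.symm yc' :=
              Subtype.ext (by simpa [smul_eq_mul] using hgc')
            rw [this, LinearEquiv.apply_symm_apply]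
    calc v * u = (f.symm xe' : R) * u + (g.symm yc' : R) * u := by rw [hv, add_mul]
    _ = 1 := by rw [t1, t2]; noncomm_ring
  -- conjugation: u * e' = e * u, so v * e * u = e'
  have key : u * e' = e * u := by
    have h1 : e * u * e' = e * u := by rw [heu, hfe]
    have h2 : (1 - e) * u * e' = 0 := by
      rw [hcu]
      have h := hgc
      rw [mul_sub, mul_one, sub_eq_self] at h
      exact h
    calc u * e' = e * u * e' + (1 - e) * u * e' := by noncomm_ring
    _ = e * u := by rw [h1, h2, add_zero]
  refine ⟨⟨v, u, hvu, huv⟩, ?_⟩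
  show v * e * u = e'
  calc v * e * u = v * (e * u) := by rw [mul_assoc]
  _ = v * (u * e') := by rw [key]
  _ = (v * u) * e' := by rw [mul_assoc]
  _ = e' := by rw [hvu, one_mul]
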